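/- Let K be a field, let j and n be positive integers with j < n, let L be an (n−j)×(n−j) symmetric matrix over K, B an (n−j)×j matrix over K, and M an invertible symmetric j×j matrix over K, and let S be the n×n symmetric block matrix S = [[L, B],[Bᵀ, M]]. Write J = {n−j+1, …, n} for the index set of the M-block. Then for all i, i' ∈ {1, …, n−j}, the (j+1)×(j+1) minor of S obtained by keeping the rows indexed by {i} ∪ J and the columns indexed by {i'} ∪ J equals (L − B M⁻¹ Bᵀ)_{i,i'} · det M. -/

import Mathlib

open Matrix

/-- Key minor computation in Lemma 3.6 of the paper: for the symmetric block matrix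
`S = [[L, B], [Bᵀ, M]]` with `M` an invertible symmetric `j × j` block, the
`(j+1) × (j+1)` minor of `S` keeping the rows `{i} ∪ J` and columns `{i'} ∪ J`
(where `J` indexes the `M`-block) equals `(L - B M⁻¹ Bᵀ)_{i,i'} · det M`. -/
theorem stmt_0 (K : Type*) [Field K] (n j : ℕ) (hj : 0 < j) (hjn : j < n)
    (L : Matrix (Fin (n - j)) (Fin (n - j)) K) (hL : Lᵀ = L)
    (B : Matrix (Fin (n - j)) (Fin j) K)
    (M : Matrix (Fin j) (Fin j) K) (hM : Mᵀ = M) (hMunit : IsUnit M.det)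
    (i i' : Fin (n - j)) :
    ((Matrix.fromBlocks L B Bᵀ M).submatrix
        (Sum.elim (fun _ : Unit => Sum.inl i) Sum.inr)
        (Sum.elim (fun _ : Unit => Sum.inl i') Sum.inr)).det
      = (L - B * M⁻¹ * Bᵀ) i i' * M.det := by
  have : Invertible M := M.invertibleOfIsUnitDet hMunit
  have heq : (Matrix.fromBlocks L B Bᵀ M).submatrix
        (Sum.elim (fun _ : Unit => Sum.inl i) Sum.inr)
        (Sum.elim (fun _ : Unit => Sum.inl i') Sum.inr)
      = Matrix.fromBlocks (fun _ _ : Unit => L i i' : Matrix Unit Unit K)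
          (fun _ k => B i k : Matrix Unit (Fin j) K)
          (fun k _ => Bᵀ k i' : Matrix (Fin j) Unit K) M := by
    ext a b
    rcases a with a | a <;> rcases b with b | b <;> rfl
  rw [heq, Matrix.det_fromBlocks₂₂ (fun _ _ : Unit => L i i' : Matrix Unit Unit K)
    (fun _ k => B i k : Matrix Unit (Fin j) K) (fun k _ => Bᵀ k i' : Matrix (Fin j) Unit K) M,
    invOf_eq_nonsing_inv, mul_comm]
  congr 1
  rw [Matrix.det_unique]
  simp [Matrix.sub_apply, Matrix.mul_apply, Finset.mul_sum]
  rfl
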